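/- Let 1 < p < ∞ and write points of ℝ^d as x = (y,t) ∈ ℝ^{d−1} × ℝ. For any measurable f : ℝ^d → ℂ, the mixed Lorentz norm satisfies ‖ t ↦ ‖f(·,t)‖_{L^{p,1}(ℝ^{d−1})} ‖_{L^p(ℝ)} ≲ ‖f‖_{L^{p,1}(ℝ^d)}, with implicit constant depending only on p and d. -/

import Mathlib

open MeasureTheory
open scoped ENNReal NNReal

/-- The Lorentz `L^{p,1}` norm: `‖f‖_{L^{p,1}} = ∫_0^∞ μ{|f| > λ}^{1/p} dλ`. -/
noncomputable def lorentzNorm1 {α : Type*} [MeasurableSpace α] (μ : Measure α) (p : ℝ)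
    (f : α → ℂ) : ℝ≥0∞ :=
  ∫⁻ l in Set.Ioi (0 : ℝ), μ {x | l < ‖f x‖} ^ (1 / p)

/-- For `1 < p < ∞` and `f` on `ℝ^d = ℝ^{d-1} × ℝ`, the mixed norm taking first the
`L^{p,1}` norm in `y` and then the `L^p` norm in `t` is dominated by the full
`L^{p,1}` norm, with a constant depending only on `p` and the dimension. -/

theorem minkowski_lintegral {α β : Type*} [MeasurableSpace α] [MeasurableSpace β]
    (μ : Measure α) (ν : Measure β) [SFinite μ] [SigmaFinite ν]
    (p : ℝ) (hp : 1 < p) (g : α → β → ℝ≥0∞)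
    (hg : Measurable (Function.uncurry g)) :
    (∫⁻ t, (∫⁻ l, g l t ∂μ) ^ p ∂ν) ^ (1 / p) ≤
      ∫⁻ l, (∫⁻ t, g l t ^ p ∂ν) ^ (1 / p) ∂μ := by
  have hp0 : (0 : ℝ) < p := lt_trans one_pos hp
  have hpq : p.HolderConjugate (p / (p - 1)) := Real.HolderConjugate.conjExponent hp
  set q : ℝ := p / (p - 1) with hq
  set F : β → ℝ≥0∞ := fun t => ∫⁻ l, g l t ∂μ with hFdef
  have hFm : Measurable F := hg.lintegral_prod_left'
  set B : ℝ≥0∞ := ∫⁻ l, (∫⁻ t, g l t ^ p ∂ν) ^ (1 / p) ∂μ with hBdef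
  set s : ℕ → Set β := spanningSets ν with hs
  set Fn : ℕ → β → ℝ≥0∞ := fun N => (s N).indicator (fun t => min (F t) N) with hFn
  have hFnm : ∀ N, Measurable (Fn N) :=
    fun N => (hFm.min measurable_const).indicator (measurableSet_spanningSets ν N)
  have hFnle : ∀ N t, Fn N t ≤ F t := by
    intro N t
    exact (Set.indicator_le fun a _ => min_le_left _ _) t
  have hgml : ∀ l, Measurable (fun t => g l t) :=
    fun l => hg.comp (measurable_const.prodMk measurable_id)
  have hgmt : ∀ t, Measurable (fun l => g l t) :=
    fun t => hg.comp (measurable_id.prodMk measurable_const)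
  -- key estimate for truncations
  have key : ∀ N, ∫⁻ t, Fn N t ^ p ∂ν ≤ B ^ p := by
    intro N
    set A : ℝ≥0∞ := ∫⁻ t, Fn N t ^ p ∂ν with hA
    have hAtop : A ≠ ∞ := by
      have hle : ∀ t, Fn N t ^ p ≤ (s N).indicator (fun _ => (N : ℝ≥0∞) ^ p) t := by
        intro t
        by_cases ht : t ∈ s N
        · simp only [Fn, Set.indicator_of_mem ht]
          exact ENNReal.rpow_le_rpow (min_le_right _ _) hp0.le
        · simp only [Fn, Set.indicator_of_notMem ht, ENNReal.zero_rpow_of_pos hp0, le_refl]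
      have : A ≤ (N : ℝ≥0∞) ^ p * ν (s N) := by
        calc A ≤ ∫⁻ t, (s N).indicator (fun _ => (N : ℝ≥0∞) ^ p) t ∂ν :=
              lintegral_mono hle
          _ = (N : ℝ≥0∞) ^ p * ν (s N) := by
              rw [lintegral_indicator (measurableSet_spanningSets ν N)]
              simp [mul_comm]; rfl
      refine ne_top_of_le_ne_top ?_ this
      exact ENNReal.mul_ne_top (ENNReal.rpow_ne_top_of_nonneg hp0.le (by simp))
        (measure_spanningSets_lt_top ν N).ne
    have step1 : A ≤ ∫⁻ t, Fn N t ^ (p - 1) * F t ∂ν := by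
      refine lintegral_mono fun t => ?_
      calc Fn N t ^ p = Fn N t ^ (p - 1) * Fn N t := by
            have e : p = (p - 1) + 1 := by ring
            rw [e, ENNReal.rpow_add_of_nonneg _ _ (by linarith) zero_le_one, ENNReal.rpow_one]
            ring_nf
        _ ≤ Fn N t ^ (p - 1) * F t := mul_le_mul_right (hFnle N t) _
    have step2 : ∫⁻ t, Fn N t ^ (p - 1) * F t ∂ν
        = ∫⁻ l, ∫⁻ t, Fn N t ^ (p - 1) * g l t ∂ν ∂μ := by
      have : ∀ t, Fn N t ^ (p - 1) * F t = ∫⁻ l, Fn N t ^ (p - 1) * g l t ∂μ := by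
        intro t
        rw [hFdef, lintegral_const_mul _ (hgmt t)]
      simp_rw [this]
      rw [lintegral_lintegral_swap]
      exact ((((hFnm N).comp measurable_fst).pow_const (p - 1)).mul
        (hg.comp (measurable_snd.prodMk measurable_fst))).aemeasurable
    have step3 : ∀ l, ∫⁻ t, Fn N t ^ (p - 1) * g l t ∂ν
        ≤ A ^ (1 / q) * (∫⁻ t, g l t ^ p ∂ν) ^ (1 / p) := by
      intro l
      have hH := ENNReal.lintegral_mul_le_Lp_mul_Lq ν hpq.symm
        (((hFnm N).pow_const (p - 1)).aemeasurable) ((hgml l).aemeasurable)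
      refine le_trans hH ?_
      have : ∀ t, (Fn N t ^ (p - 1)) ^ q = Fn N t ^ p := by
        intro t
        rw [← ENNReal.rpow_mul, hpq.sub_one_mul_conj]
      simp_rw [this]
      exact le_refl _
    have step4 : A ≤ A ^ (1 / q) * B := by
      calc A ≤ ∫⁻ l, A ^ (1 / q) * (∫⁻ t, g l t ^ p ∂ν) ^ (1 / p) ∂μ :=
            (step1.trans step2.le).trans (lintegral_mono step3)
        _ = A ^ (1 / q) * B := by
            rw [hBdef, lintegral_const_mul' _ _ (ENNReal.rpow_ne_top_of_nonneg
              hpq.symm.one_div_nonneg hAtop)]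
    -- conclude A ≤ B ^ p
    rcases eq_or_ne A 0 with hA0 | hA0
    · rw [hA0]; exact zero_le
    have hApow : A ^ (1 / p) ≤ B := by
      have hc0 : A ^ (1 / q) ≠ 0 := by
        simp [ENNReal.rpow_eq_zero_iff, hA0, hAtop, hpq.symm.one_div_pos,
          hpq.symm.one_div_pos.not_gt]
      have hct : A ^ (1 / q) ≠ ∞ := ENNReal.rpow_ne_top_of_nonneg hpq.symm.one_div_nonneg hAtop
      have : A ^ (1 / p) * A ^ (1 / q) ≤ B * A ^ (1 / q) := by
        rw [← ENNReal.rpow_add _ _ hA0 hAtop]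
        have h1 : 1 / p + 1 / q = 1 := by
          have := hpq.inv_add_inv_eq_one
          simpa [one_div] using this
        rw [h1, ENNReal.rpow_one, mul_comm B _]
        exact step4
      exact (ENNReal.mul_le_mul_iff_left hc0 hct).mp this
    calc A = (A ^ (1 / p)) ^ p := by
          rw [← ENNReal.rpow_mul, one_div, inv_mul_cancel₀ hp0.ne', ENNReal.rpow_one]
      _ ≤ B ^ p := ENNReal.rpow_le_rpow hApow hp0.le
  -- monotone convergence
  have hFnmono : ∀ t, Monotone fun N => Fn N t := by
    intro t N M hNM
    by_cases h1 : t ∈ s N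
    · have h2 : t ∈ s M := monotone_spanningSets ν hNM h1
      simp only [Fn, Set.indicator_of_mem h1, Set.indicator_of_mem h2]
      exact min_le_min le_rfl (Nat.cast_le.mpr hNM)
    · simp only [Fn, Set.indicator_of_notMem h1]
      exact zero_le
  have hsup : ∀ t, F t = ⨆ N, Fn N t := by
    intro t
    obtain ⟨N₀, hN₀⟩ : ∃ N, t ∈ s N := by
      have : t ∈ ⋃ N, s N := by rw [hs, iUnion_spanningSets]; trivial
      exact Set.mem_iUnion.mp this
    refine le_antisymm ?_ (iSup_le fun N => hFnle N t)
    rcases eq_or_ne (F t) ∞ with h | h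
    · rw [h]
      have hb : ∀ m : ℕ, (m : ℝ≥0∞) ≤ ⨆ N, Fn N t := by
        intro m
        refine le_iSup_of_le (max m N₀) ?_
        have ht : t ∈ s (max m N₀) := monotone_spanningSets ν (le_max_right _ _) hN₀
        have he : Fn (max m N₀) t = ((max m N₀ : ℕ) : ℝ≥0∞) := by
          simp [Fn, Set.indicator_of_mem ht, h]
        rw [he]
        exact Nat.cast_le.mpr (le_max_left m N₀)
      calc (⊤ : ℝ≥0∞) = ⨆ m : ℕ, (m : ℝ≥0∞) := ENNReal.iSup_natCast.symm
        _ ≤ ⨆ N, Fn N t := iSup_le hb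
    · obtain ⟨n, hn⟩ := ENNReal.exists_nat_gt h
      refine le_iSup_of_le (max n N₀) ?_
      have ht : t ∈ s (max n N₀) := monotone_spanningSets ν (le_max_right _ _) hN₀
      have hle : F t ≤ ((max n N₀ : ℕ) : ℝ≥0∞) :=
        le_trans hn.le (by exact_mod_cast Nat.cast_le.mpr (le_max_left n N₀))
      simp [Fn, Set.indicator_of_mem ht, min_eq_left hle]
  have hsup_pow : ∀ t, F t ^ p = ⨆ N, Fn N t ^ p := by
    intro t
    rw [hsup t]
    exact (ENNReal.orderIsoRpow p hp0).map_iSup _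
  have hmain : ∫⁻ t, F t ^ p ∂ν = ⨆ N, ∫⁻ t, Fn N t ^ p ∂ν := by
    simp_rw [hsup_pow]
    exact lintegral_iSup (fun N => (hFnm N).pow_const p)
      (fun N M hNM t => ENNReal.rpow_le_rpow (hFnmono t hNM) hp0.le)
  calc (∫⁻ t, F t ^ p ∂ν) ^ (1 / p) ≤ (B ^ p) ^ (1 / p) := by
        rw [hmain]
        exact ENNReal.rpow_le_rpow (iSup_le key) (by positivity)
    _ = B := by
        rw [← ENNReal.rpow_mul, mul_one_div, div_self hp0.ne', ENNReal.rpow_one]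

theorem mixed_norm_le_lorentz_norm {n : ℕ} (p : ℝ) (hp : 1 < p) :
    ∃ C : ℝ, 0 < C ∧ ∀ f : EuclideanSpace ℝ (Fin n) × ℝ → ℂ, Measurable f →
      (∫⁻ t : ℝ, (lorentzNorm1 volume p (fun y => f (y, t))) ^ p) ^ (1 / p) ≤
        ENNReal.ofReal C * lorentzNorm1 volume p f := by
  refine ⟨1, one_pos, fun f hf => ?_⟩
  have hp0 : (0 : ℝ) < p := lt_trans one_pos hp
  set g : ℝ → ℝ → ℝ≥0∞ :=
    fun l t => (volume {y : EuclideanSpace ℝ (Fin n) | l < ‖f (y, t)‖}) ^ (1 / p) with hg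
  have hS : MeasurableSet
      {z : (ℝ × ℝ) × EuclideanSpace ℝ (Fin n) | z.1.1 < ‖f (z.2, z.1.2)‖} := by
    apply measurableSet_lt
    · exact measurable_fst.fst
    · exact (hf.comp (measurable_snd.prodMk measurable_fst.snd)).norm
  have hgm : Measurable (Function.uncurry g) := by
    have h1 : Measurable fun x : ℝ × ℝ =>
        volume (Prod.mk x ⁻¹' {z : (ℝ × ℝ) × EuclideanSpace ℝ (Fin n) |
          z.1.1 < ‖f (z.2, z.1.2)‖}) :=
      measurable_measure_prodMk_left hS
    exact h1.pow_const (1 / p)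
  have hmink := minkowski_lintegral (volume.restrict (Set.Ioi (0 : ℝ)))
    (volume : Measure ℝ) p hp g hgm
  have hRHS : ∀ l : ℝ, (∫⁻ t : ℝ, g l t ^ p)
      = volume {x : EuclideanSpace ℝ (Fin n) × ℝ | l < ‖f x‖} := by
    intro l
    have hmeas : MeasurableSet {x : EuclideanSpace ℝ (Fin n) × ℝ | l < ‖f x‖} := by
      apply measurableSet_lt
      · exact measurable_const
      · exact hf.norm
    have h1 : ∀ t : ℝ, g l t ^ p
        = volume {y : EuclideanSpace ℝ (Fin n) | l < ‖f (y, t)‖} := by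
      intro t
      rw [hg, ← ENNReal.rpow_mul, one_div, inv_mul_cancel₀ hp0.ne', ENNReal.rpow_one]
    simp_rw [h1]
    rw [MeasureTheory.Measure.volume_eq_prod, Measure.prod_apply_symm hmeas]
    rfl
  calc (∫⁻ t : ℝ, (lorentzNorm1 volume p (fun y => f (y, t))) ^ p) ^ (1 / p)
      = (∫⁻ t : ℝ, (∫⁻ l in Set.Ioi (0 : ℝ), g l t) ^ p) ^ (1 / p) := rfl
    _ ≤ ∫⁻ l in Set.Ioi (0 : ℝ), (∫⁻ t : ℝ, g l t ^ p) ^ (1 / p) := hmink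
    _ = lorentzNorm1 volume p f := by
        rw [lorentzNorm1]
        refine lintegral_congr fun l => ?_
        rw [hRHS l]
    _ ≤ ENNReal.ofReal 1 * lorentzNorm1 volume p f := by
        rw [ENNReal.ofReal_one, one_mul]
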